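/- Let û₂ > k satisfy: for all x ≥ û₂, (c − b·k)/(1 − a) < x + ln((x − k)/x²), and set ŵ₂ := (c − b·û₂)/(1 − a). If (x,y) ∈ D̂₂ \ Ê₂ (that is, k ≤ x ≤ û₂ and ŵ₂ ≤ y ≤ v̂), then f(x,y) ∉ Ê₂. -/

import Mathlib

/-- No return to region `Ê₂`: if `(x,y) ∈ D̂₂ \ Ê₂` then `f(x,y) ∉ Ê₂`. -/
theorem chialvo_no_return_E2
    (a b c k : ℝ)
    (ha : a ∈ Set.Ioo (0:ℝ) 1) (hb : b ∈ Set.Ioo (0:ℝ) 1)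
    (hc : c ∈ Set.Ioo (0:ℝ) 1) (hk : 0 < k)
    (f : ℝ × ℝ → ℝ × ℝ)
    (hf : ∀ p : ℝ × ℝ,
      f p = (p.1 ^ 2 * Real.exp (p.2 - p.1) + k, a * p.2 - b * p.1 + c))
    (v : ℝ) (hv : v = (c - b * k) / (1 - a))
    (u2 : ℝ) (hu2k : u2 > k)
    (hu2 : ∀ x ≥ u2, (c - b * k) / (1 - a) < x + Real.log ((x - k) / x ^ 2))
    (w2 : ℝ) (hw2 : w2 = (c - b * u2) / (1 - a))
    (D2 E2 : Set (ℝ × ℝ))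
    (hD2 : D2 = {p : ℝ × ℝ | k ≤ p.1 ∧ p.1 ≤ u2 ∧ p.2 ≤ v})
    (hE2 : E2 = {p : ℝ × ℝ | k ≤ p.1 ∧ p.1 ≤ u2 ∧ p.2 < w2}) :
    ∀ p ∈ D2 \ E2, f p ∉ E2 := by
  intro p hp hmem
  obtain ⟨hD, hE⟩ := hp
  rw [hD2] at hD
  rw [hE2] at hE hmem
  obtain ⟨hx1, hx2, hyv⟩ := hD
  have hyw : w2 ≤ p.2 := by
    by_contra h
    exact hE ⟨hx1, hx2, lt_of_not_ge h⟩
  rw [hf p] at hmem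
  obtain ⟨_, _, hlt⟩ := hmem
  simp only at hlt
  -- second coordinate ≥ w2
  have key : w2 ≤ a * p.2 - b * p.1 + c := by
    have h1 : a * w2 ≤ a * p.2 := by nlinarith [ha.1]
    have h2 : b * p.1 ≤ b * u2 := by nlinarith [hb.1]
    have hweq : a * w2 - b * u2 + c = w2 := by
      have h1a : (1:ℝ) - a ≠ 0 := by linarith [ha.2]
      rw [hw2]
      field_simp
      ring
    linarith
  linarith
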